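/- The embedding i : S_QM → L_QM preserves binary meets: for all (𝒜₁, P₁), (𝒜₂, P₂) ∈ S_QM, i(𝒜₁, P₁) ∧ i(𝒜₂, P₂) = i((𝒜₁, P₁) ∧ (𝒜₂, P₂)), where the meet on the left is the pointwise meet in L_QM and the meet on the right is the meet in S_QM. -/

import Mathlib

open scoped ENNReal

variable (H : Type*) [NormedAddCommGroup H] [InnerProductSpace ℂ H] [CompleteSpace H]

/-- An orthogonal projection on the Hilbert space `H`, i.e. an element of `L(ℋ)`. -/
def IsProj (P : H →L[ℂ] H) : Prop := IsIdempotentElem P ∧ IsSelfAdjoint P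

/-- The lattice order on projections: `P ≤ Q` iff `P * Q = P`. -/
def pleq (P Q : H →L[ℂ] H) : Prop := P * Q = P

/-- An abelian (commutative) von Neumann algebra. -/
def IsAbelianAlg (A : VonNeumannAlgebra H) : Prop :=
  ∀ x ∈ A, ∀ y ∈ A, x * y = y * x
/-- An element of `S_QM`: a pair `(𝒜, P)` of an abelian von Neumann algebra `𝒜` and a
projection `P ∈ 𝒜`.  Pairs with `proj = 0` all represent the bottom element `⊥`. -/
structure SQM where
  alg : VonNeumannAlgebra H
  proj : H →L[ℂ] H
  abelian : IsAbelianAlg H alg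
  isProj : IsProj H proj
  mem : proj ∈ alg

/-- The order on `S_QM`: `(𝒜₁,P₁) ≤ (𝒜₂,P₂)` iff `P₁ = 0` or (`𝒜₁ ⊇ 𝒜₂` and `P₁ ≤ P₂`). -/
def SQMle (a b : SQM H) : Prop :=
  a.proj = 0 ∨ (b.alg ≤ a.alg ∧ pleq H a.proj b.proj)
/-- The collection `𝔄` of abelian von Neumann subalgebras of `B(H)`. -/
def AbAlg := {A : VonNeumannAlgebra H // IsAbelianAlg H A}
/-- The lattice `L_QM`: monotone functions `S : 𝔄 → L(ℋ)` with `S(𝒜) ∈ L(𝒜)`. -/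
structure LQM where
  S : AbAlg H → (H →L[ℂ] H)
  isProj : ∀ A : AbAlg H, IsProj H (S A)
  mem : ∀ A : AbAlg H, S A ∈ A.1
  mono : ∀ A B : AbAlg H, A.1 ≤ B.1 → pleq H (S A) (S B)

/-- `L_QM` carries the pointwise partial order. -/
instance : PartialOrder (LQM H) where
  le S₁ S₂ := ∀ A : AbAlg H, pleq H (S₁.S A) (S₂.S A)
  le_refl S A := (S.isProj A).1
  le_trans S₁ S₂ S₃ h12 h23 A := by
    show S₁.S A * S₃.S A = S₁.S A
    calc S₁.S A * S₃.S A = S₁.S A * S₂.S A * S₃.S A := by rw [h12 A]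
      _ = S₁.S A * (S₂.S A * S₃.S A) := mul_assoc _ _ _
      _ = S₁.S A := by rw [h23 A, h12 A]
  le_antisymm S₁ S₂ h12 h21 := by
    have hS : S₁.S = S₂.S := funext fun A => by
      have hc : S₁.S A * S₂.S A = S₂.S A * S₁.S A :=
        A.2 _ (S₁.mem A) _ (S₂.mem A)
      calc S₁.S A = S₁.S A * S₂.S A := (h12 A).symm
        _ = S₂.S A * S₁.S A := hc
        _ = S₂.S A := h21 A
    cases S₁; cases S₂; cases hS; rfl

theorem LQM.le_def (S₁ S₂ : LQM H) :
    S₁ ≤ S₂ ↔ ∀ A : AbAlg H, pleq H (S₁.S A) (S₂.S A) := Iff.rfl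
open Classical in
/-- The embedding `i : S_QM → L_QM`, `i(𝒜,P)(𝒜') = P` if `𝒜 ⊆ 𝒜'` and `0` otherwise. -/
noncomputable def iEmb (a : SQM H) : LQM H where
  S B := if a.alg ≤ B.1 then a.proj else 0
  isProj B := by
    split_ifs
    · exact a.isProj
    · exact ⟨by simp [IsIdempotentElem], by simp [IsSelfAdjoint]⟩
  mem B := by
    split_ifs with h
    · exact h a.mem
    · exact zero_mem B.1
  mono A B hAB := by
    show (if a.alg ≤ A.1 then a.proj else 0) * (if a.alg ≤ B.1 then a.proj else 0)
        = (if a.alg ≤ A.1 then a.proj else 0)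
    split_ifs with h1 h2
    · exact a.isProj.1
    · exact absurd (h1.trans hAB) h2
    · exact zero_mul _
    · exact zero_mul _

lemma iEmb_mono' (x y : SQM H) (h : SQMle H x y) : iEmb H x ≤ iEmb H y := by
  classical
  intro B
  show (if x.alg ≤ B.1 then x.proj else 0) * (if y.alg ≤ B.1 then y.proj else 0)
      = (if x.alg ≤ B.1 then x.proj else 0)
  rcases h with h0 | ⟨hle, hp⟩
  · simp [h0]
  · split_ifs with h1 h2
    · exact hp
    · exact absurd (hle.trans h1) h2
    · exact zero_mul _
    · exact zero_mul _

/-- The embedding `i` preserves binary meets: the (pointwise) meet in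
`L_QM` of `i(𝒜₁,P₁)` and `i(𝒜₂,P₂)` is `i((𝒜₁,P₁) ⊓ (𝒜₂,P₂))`, where `(𝒜₁,P₁) ⊓ (𝒜₂,P₂)`
is the meet in `S_QM`. -/
theorem iEmb_preserves_meet (a b m : SQM H)
    (hm : ∀ x : SQM H, SQMle H x m ↔ (SQMle H x a ∧ SQMle H x b))
    (M : LQM H) (hM : IsGLB {iEmb H a, iEmb H b} M) :
    M = iEmb H m := by
  have hmam := (hm m).mp (Or.inr ⟨le_rfl, m.isProj.1⟩)
  have hlb : iEmb H m ∈ lowerBounds {iEmb H a, iEmb H b} := by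
    rintro S (rfl | rfl)
    · exact iEmb_mono' H m a hmam.1
    · exact iEmb_mono' H m b hmam.2
  have hub : ∀ S : LQM H, S ∈ lowerBounds {iEmb H a, iEmb H b} → S ≤ iEmb H m := by
    intro S hS B
    classical
    have hSa := hS (Set.mem_insert _ _) B
    have hSb := hS (Set.mem_insert_of_mem _ rfl) B
    set x : SQM H := ⟨B.1, S.S B, B.2, S.isProj B, S.mem B⟩ with hx
    have hxa : SQMle H x a := by
      by_cases h : a.alg ≤ B.1
      · exact Or.inr ⟨h, by simpa [pleq, iEmb, h] using hSa⟩
      · exact Or.inl (by simpa [pleq, iEmb, h] using hSa.symm)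
    have hxb : SQMle H x b := by
      by_cases h : b.alg ≤ B.1
      · exact Or.inr ⟨h, by simpa [pleq, iEmb, h] using hSb⟩
      · exact Or.inl (by simpa [pleq, iEmb, h] using hSb.symm)
    have hxm : SQMle H x m := (hm x).mpr ⟨hxa, hxb⟩
    show S.S B * (if m.alg ≤ B.1 then m.proj else 0) = S.S B
    rcases hxm with h0 | ⟨hle, hp⟩
    · have : S.S B = 0 := h0
      simp [this]
    · rw [if_pos hle]; exact hp
  exact le_antisymm (hub M hM.1) (hM.2 hlb)
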